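/- Performing a depth-first search from a root r in a finite connected graph, and outputting each vertex of even depth (distance from r in the DFS tree) when it is first discovered and each vertex of odd depth when its DFS call finishes, produces an ordering of all vertices in which consecutive vertices have distance at most 3 in the graph. -/

import Mathlib

/-- A fuel-bounded depth-first search from vertex `v` at depth `d`, given an
adjacency-list function `adj` and a list `vis` of already-visited vertices.
Returns the new visited list together with the output sequence, where a vertex
of even depth is output when it is first discovered (pre-order) and a vertex of
odd depth is output when its DFS call finishes (post-order). -/
def dfsOut {V : Type} [DecidableEq V] (adj : V → List V) :
    ℕ → List V → V → ℕ → List V × List V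
  | 0, vis, _, _ => (vis, [])
  | (fuel + 1), vis, v, d =>
    let step : List V × List V → V → List V × List V := fun p w =>
      if w ∈ p.1 then p
      else
        let q := dfsOut adj fuel p.1 w (d + 1)
        (q.1, p.2 ++ q.2)
    let r := (adj v).foldl step (v :: vis, [])
    if d % 2 = 0 then (r.1, v :: r.2) else (r.1, r.2 ++ [v])

section Aux

variable {V : Type} [DecidableEq V] {G : SimpleGraph V}

private lemma adj_dist_le {a b : V} (h : G.Adj a b) : G.dist a b ≤ 1 := by
  simpa using SimpleGraph.dist_le h.toWalk

/-- Structural/ordering spec of `dfsOut`. -/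
private lemma dfsA (hG : G.Connected) (adj : V → List V)
    (hadj : ∀ u w : V, w ∈ adj u ↔ G.Adj u w) :
    ∀ (fuel : ℕ) (vis : List V) (v : V) (d : ℕ), v ∉ vis →
      vis ⊆ (dfsOut adj fuel vis v d).1 ∧
      (∀ x, x ∈ (dfsOut adj fuel vis v d).1 ↔ x ∈ (dfsOut adj fuel vis v d).2 ∨ x ∈ vis) ∧
      (dfsOut adj fuel vis v d).2.Nodup ∧
      (∀ x ∈ (dfsOut adj fuel vis v d).2, x ∉ vis) ∧
      (∀ x, ((dfsOut adj fuel vis v d).2).head? = some x →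
        G.dist x v ≤ if d % 2 = 0 then 0 else 1) ∧
      (∀ x, ((dfsOut adj fuel vis v d).2).getLast? = some x →
        G.dist x v ≤ if d % 2 = 0 then 1 else 0) ∧
      ((dfsOut adj fuel vis v d).2).Chain' (fun a b => G.dist a b ≤ 3) := by
  intro fuel
  induction fuel with
  | zero =>
    intro vis v d hv
    exact ⟨fun x h => h, by simp [dfsOut], by simp [dfsOut], by simp [dfsOut],
      by simp [dfsOut], by simp [dfsOut], by simp [dfsOut]; exact List.isChain_nil⟩
  | succ fuel ih =>
    intro vis v d hv
    have hsum : (if (d + 1) % 2 = 0 then (0 : ℕ) else 1)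
        + (if (d + 1) % 2 = 0 then (1 : ℕ) else 0) = 1 := by
      split <;> rfl
    have hA1 : (if (d + 1) % 2 = 0 then (0 : ℕ) else 1) ≤ 1 := by split <;> omega
    have hB1 : (if (d + 1) % 2 = 0 then (1 : ℕ) else 0) ≤ 1 := by split <;> omega
    have key : ∀ (L : List V), (∀ w ∈ L, G.Adj v w) → ∀ (a : List V × List V),
        (v :: vis) ⊆ a.1 →
        (∀ x, x ∈ a.1 ↔ x ∈ a.2 ∨ x ∈ v :: vis) →
        a.2.Nodup →
        (∀ x ∈ a.2, x ∉ v :: vis) →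
        a.2.Chain' (fun p q => G.dist p q ≤ 3) →
        (∀ x, a.2.head? = some x →
          G.dist x v ≤ (if (d + 1) % 2 = 0 then 0 else 1) + 1) →
        (∀ x, a.2.getLast? = some x →
          G.dist x v ≤ (if (d + 1) % 2 = 0 then 1 else 0) + 1) →
        ((v :: vis) ⊆ (L.foldl (fun p w => if w ∈ p.1 then p else
            ((dfsOut adj fuel p.1 w (d + 1)).1, p.2 ++ (dfsOut adj fuel p.1 w (d + 1)).2)) a).1 ∧
         (∀ x, x ∈ (L.foldl (fun p w => if w ∈ p.1 then p else
            ((dfsOut adj fuel p.1 w (d + 1)).1, p.2 ++ (dfsOut adj fuel p.1 w (d + 1)).2)) a).1 ↔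
            x ∈ (L.foldl (fun p w => if w ∈ p.1 then p else
            ((dfsOut adj fuel p.1 w (d + 1)).1, p.2 ++ (dfsOut adj fuel p.1 w (d + 1)).2)) a).2 ∨
            x ∈ v :: vis) ∧
         (L.foldl (fun p w => if w ∈ p.1 then p else
            ((dfsOut adj fuel p.1 w (d + 1)).1, p.2 ++ (dfsOut adj fuel p.1 w (d + 1)).2)) a).2.Nodup ∧
         (∀ x ∈ (L.foldl (fun p w => if w ∈ p.1 then p else
            ((dfsOut adj fuel p.1 w (d + 1)).1, p.2 ++ (dfsOut adj fuel p.1 w (d + 1)).2)) a).2,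
            x ∉ v :: vis) ∧
         (L.foldl (fun p w => if w ∈ p.1 then p else
            ((dfsOut adj fuel p.1 w (d + 1)).1, p.2 ++ (dfsOut adj fuel p.1 w (d + 1)).2)) a).2.Chain'
            (fun p q => G.dist p q ≤ 3) ∧
         (∀ x, (L.foldl (fun p w => if w ∈ p.1 then p else
            ((dfsOut adj fuel p.1 w (d + 1)).1, p.2 ++ (dfsOut adj fuel p.1 w (d + 1)).2)) a).2.head?
            = some x → G.dist x v ≤ (if (d + 1) % 2 = 0 then 0 else 1) + 1) ∧
         (∀ x, (L.foldl (fun p w => if w ∈ p.1 then p else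
            ((dfsOut adj fuel p.1 w (d + 1)).1, p.2 ++ (dfsOut adj fuel p.1 w (d + 1)).2)) a).2.getLast?
            = some x → G.dist x v ≤ (if (d + 1) % 2 = 0 then 1 else 0) + 1)) := by
      intro L
      induction L with
      | nil =>
        intro _ a h1 h2 h3 h4 h5 h6 h7
        exact ⟨h1, h2, h3, h4, h5, h6, h7⟩
      | cons w L ihL =>
        intro hL a h1 h2 h3 h4 h5 h6 h7
        simp only [List.foldl_cons]
        by_cases hw : w ∈ a.1
        · rw [if_pos hw]
          exact ihL (fun x hx => hL x (List.mem_cons_of_mem _ hx)) a h1 h2 h3 h4 h5 h6 h7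
        · rw [if_neg hw]
          obtain ⟨qsub, qmem, qnd, qnotin, qh, ql, qc⟩ := ih a.1 w (d + 1) hw
          have hwv : G.Adj v w := hL w List.mem_cons_self
          have hdwv : G.dist w v ≤ 1 := adj_dist_le hwv.symm
          have hqhead : ∀ x, (dfsOut adj fuel a.1 w (d + 1)).2.head? = some x →
              G.dist x v ≤ (if (d + 1) % 2 = 0 then 0 else 1) + 1 := by
            intro x hx
            have h1' := qh x hx
            have h2' : G.dist x v ≤ G.dist x w + G.dist w v := hG.dist_triangle
            omega
          have hqlast : ∀ x, (dfsOut adj fuel a.1 w (d + 1)).2.getLast? = some x →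
              G.dist x v ≤ (if (d + 1) % 2 = 0 then 1 else 0) + 1 := by
            intro x hx
            have h1' := ql x hx
            have h2' : G.dist x v ≤ G.dist x w + G.dist w v := hG.dist_triangle
            omega
          apply ihL (fun x hx => hL x (List.mem_cons_of_mem _ hx))
          · exact fun x hx => qsub (h1 hx)
          · intro x
            rw [qmem x, h2 x, List.mem_append]
            tauto
          · refine h3.append qnd ?_
            intro x hx hq
            exact qnotin x hq ((h2 x).mpr (Or.inl hx))
          · intro x hx
            rcases List.mem_append.mp hx with hx | hx
            · exact h4 x hx
            · exact fun hxv => qnotin x hx (h1 hxv)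
          · refine h5.append qc ?_
            intro x hx y hy
            have hx' := h7 x hx
            have hy' := hqhead y hy
            have ht : G.dist x y ≤ G.dist x v + G.dist v y := hG.dist_triangle
            rw [SimpleGraph.dist_comm (u := v) (v := y)] at ht
            omega
          · intro x hx
            by_cases hnil : a.2 = []
            · rw [hnil] at hx
              simp only [List.nil_append] at hx
              exact hqhead x hx
            · rw [List.head?_append_of_ne_nil _ hnil] at hx
              exact h6 x hx
          · intro x hx
            by_cases hnil : (dfsOut adj fuel a.1 w (d + 1)).2 = []
            · rw [hnil, List.append_nil] at hx
              exact h7 x hx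
            · rw [List.getLast?_append_of_ne_nil _ hnil] at hx
              exact hqlast x hx
    have hmain := key (adj v) (fun w hw => (hadj v w).1 hw) (v :: vis, [])
      (fun x h => h) (by simp) (by simp) (by simp) (by simp; exact List.isChain_nil) (by simp) (by simp)
    obtain ⟨m1, m2, m3, m4, m5, m6, m7⟩ := hmain
    set b := (adj v).foldl (fun p w => if w ∈ p.1 then p else
        ((dfsOut adj fuel p.1 w (d + 1)).1, p.2 ++ (dfsOut adj fuel p.1 w (d + 1)).2))
        (v :: vis, ([] : List V)) with hb
    have hr : dfsOut adj (fuel + 1) vis v d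
        = if d % 2 = 0 then (b.1, v :: b.2) else (b.1, b.2 ++ [v]) := rfl
    by_cases hd : d % 2 = 0
    · rw [hr, if_pos hd]
      have hA0 : (if (d + 1) % 2 = 0 then (0 : ℕ) else 1) = 1 := if_neg (by omega)
      have hB0 : (if (d + 1) % 2 = 0 then (1 : ℕ) else 0) = 0 := if_neg (by omega)
      refine ⟨fun x hx => m1 (List.mem_cons_of_mem _ hx), ?_, ?_, ?_, ?_, ?_, ?_⟩
      · intro x
        rw [m2 x]
        simp only [List.mem_cons]
        tauto
      · exact List.nodup_cons.mpr ⟨fun h => m4 v h List.mem_cons_self, m3⟩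
      · intro x hx
        rcases List.mem_cons.mp hx with rfl | hx
        · exact hv
        · exact fun h => m4 x hx (List.mem_cons_of_mem _ h)
      · intro x hx
        simp only [List.head?_cons, Option.some.injEq] at hx
        subst hx
        rw [if_pos hd]
        simp [SimpleGraph.dist_self]
      · intro x hx
        rw [if_pos hd]
        by_cases hnil : b.2 = []
        · rw [hnil] at hx
          simp only [List.getLast?_singleton, Option.some.injEq] at hx
          subst hx
          simp [SimpleGraph.dist_self]
        · rw [show (v :: b.2) = [v] ++ b.2 by rfl,
            List.getLast?_append_of_ne_nil _ hnil] at hx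
          have := m7 x hx
          omega
      · refine List.isChain_cons.mpr ⟨?_, m5⟩
        intro y hy
        have h1 := m6 y hy
        rw [SimpleGraph.dist_comm]
        omega
    · rw [hr, if_neg hd]
      have hA0 : (if (d + 1) % 2 = 0 then (0 : ℕ) else 1) = 0 := if_pos (by omega)
      refine ⟨fun x hx => m1 (List.mem_cons_of_mem _ hx), ?_, ?_, ?_, ?_, ?_, ?_⟩
      · intro x
        rw [m2 x]
        simp only [List.mem_append, List.mem_cons, List.mem_singleton]
        tauto
      · refine m3.append (List.nodup_singleton v) ?_
        intro x hx hxv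
        rcases List.mem_singleton.mp hxv with rfl
        exact m4 x hx List.mem_cons_self
      · intro x hx
        rcases List.mem_append.mp hx with hx | hx
        · exact fun h => m4 x hx (List.mem_cons_of_mem _ h)
        · rcases List.mem_singleton.mp hx with rfl
          exact hv
      · intro x hx
        rw [if_neg hd]
        by_cases hnil : b.2 = []
        · rw [hnil] at hx
          simp only [List.nil_append, List.head?_cons, Option.some.injEq] at hx
          subst hx
          simp [SimpleGraph.dist_self]
        · rw [List.head?_append_of_ne_nil _ hnil] at hx
          have := m6 x hx
          omega
      · intro x hx
        rw [List.getLast?_append_of_ne_nil _ (by simp)] at hx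
        simp only [List.getLast?_singleton, Option.some.injEq] at hx
        subst hx
        rw [if_neg hd]
        simp [SimpleGraph.dist_self]
      · refine m5.append (List.isChain_singleton v) ?_
        intro x hx y hy
        simp only [List.head?_cons, Option.mem_def, Option.some.injEq] at hy
        subst hy
        have := m7 x hx
        omega

/-- Completeness spec of `dfsOut`: with enough fuel, the visited set becomes
closed under adjacency. -/
private lemma dfsB [Fintype V] (adj : V → List V) :
    ∀ (fuel : ℕ) (vis : List V) (v : V) (d : ℕ), v ∉ vis →
      (Finset.univ.filter (fun x => x ∉ vis)).card ≤ fuel →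
      v ∈ (dfsOut adj fuel vis v d).1 ∧
      vis ⊆ (dfsOut adj fuel vis v d).1 ∧
      (∀ x ∈ (dfsOut adj fuel vis v d).1, x ∉ vis →
        ∀ y ∈ adj x, y ∈ (dfsOut adj fuel vis v d).1) := by
  intro fuel
  induction fuel with
  | zero =>
    intro vis v d hv hcard
    exfalso
    have hvf : v ∈ Finset.univ.filter (fun x => x ∉ vis) := by simp [hv]
    have := Finset.card_pos.mpr ⟨v, hvf⟩
    omega
  | succ fuel ih =>
    intro vis v d hv hcard
    have hvf : v ∈ Finset.univ.filter (fun x => x ∉ vis) := by simp [hv]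
    have hcard' : (Finset.univ.filter (fun x => x ∉ (v :: vis))).card ≤ fuel := by
      have hset : Finset.univ.filter (fun x => x ∉ (v :: vis))
          = (Finset.univ.filter (fun x => x ∉ vis)).erase v := by
        ext x
        simp [List.mem_cons, not_or, and_comm]
      rw [hset, Finset.card_erase_of_mem hvf]
      have := Finset.card_pos.mpr ⟨v, hvf⟩
      omega
    have key : ∀ (L : List V) (a : List V × List V),
        (v :: vis) ⊆ a.1 →
        (∀ x ∈ a.1, x ∉ v :: vis → ∀ y ∈ adj x, y ∈ a.1) →
        (a.1 ⊆ (L.foldl (fun p w => if w ∈ p.1 then p else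
            ((dfsOut adj fuel p.1 w (d + 1)).1, p.2 ++ (dfsOut adj fuel p.1 w (d + 1)).2)) a).1 ∧
         (∀ w ∈ L, w ∈ (L.foldl (fun p w => if w ∈ p.1 then p else
            ((dfsOut adj fuel p.1 w (d + 1)).1, p.2 ++ (dfsOut adj fuel p.1 w (d + 1)).2)) a).1) ∧
         (∀ x ∈ (L.foldl (fun p w => if w ∈ p.1 then p else
            ((dfsOut adj fuel p.1 w (d + 1)).1, p.2 ++ (dfsOut adj fuel p.1 w (d + 1)).2)) a).1,
            x ∉ v :: vis → ∀ y ∈ adj x, y ∈ (L.foldl (fun p w => if w ∈ p.1 then p else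
            ((dfsOut adj fuel p.1 w (d + 1)).1, p.2 ++ (dfsOut adj fuel p.1 w (d + 1)).2)) a).1)) := by
      intro L
      induction L with
      | nil =>
        intro a h1 h2
        exact ⟨fun x hx => hx, by simp, h2⟩
      | cons w L ihL =>
        intro a h1 h2
        simp only [List.foldl_cons]
        by_cases hw : w ∈ a.1
        · rw [if_pos hw]
          obtain ⟨s1, s2, s3⟩ := ihL a h1 h2
          exact ⟨s1, fun x hx => by
            rcases List.mem_cons.mp hx with rfl | hx
            · exact s1 hw
            · exact s2 x hx, s3⟩
        · rw [if_neg hw]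
          have hcarda : (Finset.univ.filter (fun x => x ∉ a.1)).card ≤ fuel := by
            refine le_trans (Finset.card_le_card ?_) hcard'
            intro x hx
            simp only [Finset.mem_filter, Finset.mem_univ, true_and] at hx ⊢
            exact fun hxv => hx (h1 hxv)
          obtain ⟨qmem, qsub, qclos⟩ := ih a.1 w (d + 1) hw hcarda
          obtain ⟨s1, s2, s3⟩ := ihL ((dfsOut adj fuel a.1 w (d + 1)).1,
              a.2 ++ (dfsOut adj fuel a.1 w (d + 1)).2)
            (fun x hx => qsub (h1 hx))
            (by
              intro x hx hxv y hy
              by_cases hxa : x ∈ a.1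
              · exact qsub (h2 x hxa hxv y hy)
              · exact qclos x hx hxa y hy)
          refine ⟨fun x hx => s1 (qsub hx), ?_, s3⟩
          intro x hx
          rcases List.mem_cons.mp hx with rfl | hx
          · exact s1 qmem
          · exact s2 x hx
    obtain ⟨s1, s2, s3⟩ := key (adj v) (v :: vis, ([] : List V)) (fun x hx => hx)
      (by intro x hx hxv; exact absurd hx hxv)
    set b := (adj v).foldl (fun p w => if w ∈ p.1 then p else
        ((dfsOut adj fuel p.1 w (d + 1)).1, p.2 ++ (dfsOut adj fuel p.1 w (d + 1)).2))
        (v :: vis, ([] : List V)) with hbdef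
    have hfst : (dfsOut adj (fuel + 1) vis v d).1 = b.1 := by
      show (if d % 2 = 0 then (b.1, v :: b.2) else (b.1, b.2 ++ [v])).1 = b.1
      by_cases hd : d % 2 = 0 <;> simp [hd]
    rw [hfst]
    refine ⟨s1 List.mem_cons_self, fun x hx => s1 (List.mem_cons_of_mem _ hx), ?_⟩
    intro x hx hxvis y hy
    by_cases hxv : x = v
    · subst hxv
      exact s2 y hy
    · exact s3 x hx (by simp [hxv, hxvis]) y hy

end Aux

/-- Performing a DFS from a root `r` in a finite connected graph, outputting
even-depth vertices at discovery and odd-depth vertices at completion,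
produces an ordering of all vertices in which consecutive vertices have graph
distance at most 3. -/
theorem stmt1 {V : Type} [Fintype V] [DecidableEq V] (G : SimpleGraph V)
    (adj : V → List V) (hadj : ∀ u w : V, w ∈ adj u ↔ G.Adj u w)
    (hconn : G.Connected) (r : V) :
    ∀ out : List V, out = (dfsOut adj (Fintype.card V) [] r 0).2 →
      out.Nodup ∧ (∀ v : V, v ∈ out) ∧
      ∀ i, (h : i + 1 < out.length) →
        G.dist (out.get ⟨i, by omega⟩) (out.get ⟨i + 1, h⟩) ≤ 3 := by
  intro out hout
  obtain ⟨hsub, hmem, hnd, hnotin, hh, hl, hc⟩ :=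
    dfsA hconn adj hadj (Fintype.card V) [] r 0 (by simp)
  obtain ⟨hrmem, -, hclos⟩ := dfsB adj (Fintype.card V) [] r 0 (by simp) (by simp)
  subst hout
  have hall : ∀ v : V, v ∈ (dfsOut adj (Fintype.card V) [] r 0).1 := by
    have hstep : ∀ {u w : V}, G.Walk u w →
        u ∈ (dfsOut adj (Fintype.card V) [] r 0).1 →
        w ∈ (dfsOut adj (Fintype.card V) [] r 0).1 := by
      intro u w p
      induction p with
      | nil => exact id
      | cons h p ihp =>
        intro hu
        exact ihp (hclos _ hu (by simp) _ ((hadj _ _).2 h))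
    intro v
    obtain ⟨p⟩ := hconn.preconnected r v
    exact hstep p hrmem
  refine ⟨hnd, ?_, ?_⟩
  · intro v
    have := (hmem v).mp (hall v)
    simpa using this
  · intro i h
    exact List.isChain_iff_getElem.mp hc i (by omega)
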